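/- Recovery of the optimal plan from optimal dual vectors (Proposition 3.3): if entrywise positive vectors φ̂^k ∈ ℝ^{n_k}, k = 1,…,K, maximize the Sinkhorn function S over all entrywise positive dual vectors, then the tensor Π̂ defined by Π̂_i = 𝒦_i ∏_{k=1}^K φ̂^k_{i_k} is an admissible plan, Π̂ ∈ Π(μ¹,…,μ^K), and Π̂ minimizes the regularized objective Σ_{i∈I} Π_i C_i + η Σ_{i∈I} Π_i (log Π_i − 1) over Π(μ¹,…,μ^K). -/

import Mathlib

lemma entropy_ineq (p q : ℝ) (hp : 0 ≤ p) (hq : 0 < q) :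
    p * Real.log q - q ≤ p * Real.log p - p := by
  rcases hp.eq_or_lt with h | h
  · simp [← h, Real.log_zero]; linarith
  · have h1 : Real.log (q / p) ≤ q / p - 1 := Real.log_le_sub_one_of_pos (by positivity)
    rw [Real.log_div (ne_of_gt hq) (ne_of_gt h)] at h1
    have := mul_le_mul_of_nonneg_left h1 hp
    have hpn : p ≠ 0 := ne_of_gt h
    field_simp at this
    nlinarith

lemma pointwise_ineq (η c p q L : ℝ) (hη : 0 < η) (hp : 0 ≤ p) (hq : 0 < q)
    (hL : c + η * Real.log q = η * L) :
    q * c + η * (q * (Real.log q - 1)) + η * L * (p - q)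
      ≤ p * c + η * (p * (Real.log p - 1)) := by
  have e2 := mul_le_mul_of_nonneg_left (entropy_ineq p q hp hq) hη.le
  have hc : c = η * L - η * Real.log q := by linarith
  rw [hc]
  ring_nf
  ring_nf at e2
  linarith

lemma fiber_sum {K : ℕ} {n : Fin K → ℕ} (k0 : Fin K) (g : Fin (n k0) → ℝ)
    (h : (∀ k, Fin (n k)) → ℝ) :
    ∑ i : ∀ k, Fin (n k), g (i k0) * h i
      = ∑ j, g j * ∑ i : ∀ k, Fin (n k), if i k0 = j then h i else 0 := by
  simp only [Finset.mul_sum, mul_ite, mul_zero]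
  rw [Finset.sum_comm]
  apply Finset.sum_congr rfl
  intro i _
  simp [Finset.sum_ite_eq]



lemma key_eq (a b : ℝ) (h : ∀ t : ℝ, 0 < t → a * Real.log t ≤ b * (t - 1)) : a = b := by
  set F : ℝ → ℝ := fun x => a * x - b * (Real.exp x - 1) with hF
  have hmax : IsMaxOn F Set.univ 0 := by
    intro x _
    have := h (Real.exp x) (Real.exp_pos x)
    simp only [Real.log_exp] at this
    simp only [hF, Real.exp_zero]
    simp
    linarith
  have hloc : IsLocalMax F 0 := hmax.isLocalMax (by simp)
  have hd : HasDerivAt F (a - b) 0 := by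
    have h1 : HasDerivAt (fun x : ℝ => a * x) a 0 := by
      simpa using (hasDerivAt_id (0:ℝ)).const_mul a
    have h2 : HasDerivAt (fun x : ℝ => b * (Real.exp x - 1)) b 0 := by
      simpa using ((Real.hasDerivAt_exp 0).sub_const 1).const_mul b
    exact h1.sub h2
  have := hloc.deriv_eq_zero
  rw [hd.deriv] at this
  linarith

lemma sinkhorn_marginals
    (K : ℕ) (n : Fin K → ℕ)
    (μ : ∀ k, Fin (n k) → ℝ)
    (C : (∀ k, Fin (n k)) → ℝ)
    (η : ℝ) (hη : 0 < η)
    (φ : ∀ k, Fin (n k) → ℝ) (hφ : ∀ k j, 0 < φ k j)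
    (hmax : ∀ ψ : ∀ k, Fin (n k) → ℝ, (∀ k j, 0 < ψ k j) →
      η * (∑ k, ∑ j, μ k j * Real.log (ψ k j))
        - η * (∑ i : ∀ k, Fin (n k), Real.exp (-C i / η) * ∏ k, ψ k (i k))
      ≤ η * (∑ k, ∑ j, μ k j * Real.log (φ k j))
        - η * (∑ i : ∀ k, Fin (n k), Real.exp (-C i / η) * ∏ k, φ k (i k))) :
    ∀ (k : Fin K) (j : Fin (n k)),
        (∑ i : ∀ k, Fin (n k),
          if i k = j then Real.exp (-C i / η) * ∏ k, φ k (i k) else 0) = μ k j := by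
  set Pl : (∀ k, Fin (n k)) → ℝ := fun i => Real.exp (-C i / η) * ∏ k, φ k (i k) with hPl
  intro k0 j0
  symm
  apply key_eq
  intro t ht
  -- construct perturbed duals
  set w : Fin (n k0) → ℝ := Function.update (fun _ => (1:ℝ)) j0 t with hw
  set c : ∀ k, Fin (n k) → ℝ := Function.update (fun _ => fun _ => (1:ℝ)) k0 w with hc
  have hck : ∀ k, k ≠ k0 → c k = fun _ => (1:ℝ) := by
    intro k hk; simp [hc, Function.update_of_ne hk]
  have hck0 : c k0 = w := by simp [hc]
  have hwj : ∀ j, j ≠ j0 → w j = 1 := by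
    intro j hj; simp [hw, Function.update_of_ne hj]
  have hwj0 : w j0 = t := by simp [hw]
  have hcpos : ∀ k j, 0 < c k j := by
    intro k j
    by_cases hk : k = k0
    · subst hk; rw [hck0]
      by_cases hj : j = j0
      · subst hj; rw [hwj0]; exact ht
      · rw [hwj j hj]; exact one_pos
    · rw [hck k hk]; exact one_pos
  set ψ : ∀ k, Fin (n k) → ℝ := fun k j => φ k j * c k j with hψ
  have hψpos : ∀ k j, 0 < ψ k j := fun k j => mul_pos (hφ k j) (hcpos k j)
  have E1 : (∑ k, ∑ j, μ k j * Real.log (ψ k j))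
      = (∑ k, ∑ j, μ k j * Real.log (φ k j)) + μ k0 j0 * Real.log t := by
    have : ∀ k j, Real.log (ψ k j) = Real.log (φ k j) + Real.log (c k j) := by
      intro k j
      exact Real.log_mul (ne_of_gt (hφ k j)) (ne_of_gt (hcpos k j))
    simp only [this, mul_add, Finset.sum_add_distrib]
    congr 1
    rw [Finset.sum_eq_single k0]
    · rw [Finset.sum_eq_single j0]
      · rw [hck0, hwj0]
      · intro j _ hj; rw [hck0, hwj j hj, Real.log_one, mul_zero]
      · simp
    · intro k _ hk; rw [hck k hk]
      simp
    · simp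
  have E2 : (∑ i : ∀ k, Fin (n k), Real.exp (-C i / η) * ∏ k, ψ k (i k))
      = (∑ i, Pl i) + (t - 1) * (∑ i : ∀ k, Fin (n k), if i k0 = j0 then Pl i else 0) := by
    have hterm : ∀ i : ∀ k, Fin (n k),
        Real.exp (-C i / η) * ∏ k, ψ k (i k)
          = Pl i + (t - 1) * (if i k0 = j0 then Pl i else 0) := by
      intro i
      have hprodc : (∏ k, c k (i k)) = if i k0 = j0 then t else 1 := by
        rw [Finset.prod_eq_single k0]
        · rw [hck0]
          by_cases hj : i k0 = j0
          · rw [hj, hwj0]; simp [hj]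
          · rw [hwj _ hj]; simp [hj]
        · intro k _ hk; rw [hck k hk]
        · simp
      have : (∏ k, ψ k (i k)) = (∏ k, φ k (i k)) * ∏ k, c k (i k) := by
        rw [hψ, Finset.prod_mul_distrib]
      rw [this, hprodc, hPl]
      by_cases hj : i k0 = j0 <;> simp [hj] <;> ring
    rw [Finset.sum_congr rfl (fun i _ => hterm i), Finset.sum_add_distrib, Finset.mul_sum]
  have h := hmax ψ hψpos
  rw [E1, E2] at h
  nlinarith [h, hη]

lemma minim (K : ℕ) (n : Fin K → ℕ)
    (μ : ∀ k, Fin (n k) → ℝ)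
    (C : (∀ k, Fin (n k)) → ℝ)
    (η : ℝ) (hη : 0 < η)
    (φ : ∀ k, Fin (n k) → ℝ) (hφ : ∀ k j, 0 < φ k j)
    (hmarg : ∀ (k : Fin K) (j : Fin (n k)),
        (∑ i : ∀ k, Fin (n k),
          if i k = j then Real.exp (-C i / η) * ∏ k, φ k (i k) else 0) = μ k j)
    (T : (∀ k, Fin (n k)) → ℝ)
    (hT0 : ∀ i, 0 ≤ T i)
    (hTm : ∀ (k : Fin K) (j : Fin (n k)),
        (∑ i : ∀ k, Fin (n k), if i k = j then T i else 0) = μ k j) :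
      (∑ i : ∀ k, Fin (n k), (Real.exp (-C i / η) * ∏ k, φ k (i k)) * C i)
        + η * (∑ i : ∀ k, Fin (n k), (Real.exp (-C i / η) * ∏ k, φ k (i k)) *
            (Real.log (Real.exp (-C i / η) * ∏ k, φ k (i k)) - 1))
      ≤ (∑ i : ∀ k, Fin (n k), T i * C i)
        + η * (∑ i : ∀ k, Fin (n k), T i * (Real.log (T i) - 1)) := by
  set Pl : (∀ k, Fin (n k)) → ℝ := fun i => Real.exp (-C i / η) * ∏ k, φ k (i k) with hPl
  set L : (∀ k, Fin (n k)) → ℝ := fun i => ∑ k, Real.log (φ k (i k)) with hL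
  have hPlpos : ∀ i, 0 < Pl i :=
    fun i => mul_pos (Real.exp_pos _) (Finset.prod_pos fun k _ => hφ k (i k))
  have hlog : ∀ i, C i + η * Real.log (Pl i) = η * L i := by
    intro i
    have hprodpos : 0 < ∏ k, φ k (i k) := Finset.prod_pos fun k _ => hφ k (i k)
    have : Real.log (Pl i) = -C i / η + L i := by
      rw [hPl]
      simp only
      rw [Real.log_mul (Real.exp_ne_zero _) (ne_of_gt hprodpos), Real.log_exp,
        Real.log_prod (fun k _ => ne_of_gt (hφ k (i k)))]
    rw [this]
    field_simp
    ring
  have hpt : ∀ i, Pl i * C i + η * (Pl i * (Real.log (Pl i) - 1)) + η * L i * (T i - Pl i)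
      ≤ T i * C i + η * (T i * (Real.log (T i) - 1)) :=
    fun i => pointwise_ineq η (C i) (T i) (Pl i) (L i) hη (hT0 i) (hPlpos i) (hlog i)
  have hsum := Finset.sum_le_sum (fun i (_ : i ∈ Finset.univ) => hpt i)
  have hzero : ∑ i : ∀ k, Fin (n k), L i * (T i - Pl i) = 0 := by
    have step1 : ∑ i : ∀ k, Fin (n k), L i * (T i - Pl i)
        = ∑ k, ∑ i : ∀ k, Fin (n k), Real.log (φ k (i k)) * (T i - Pl i) := by
      rw [Finset.sum_comm]
      apply Finset.sum_congr rfl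
      intro i _
      rw [hL, Finset.sum_mul]
    rw [step1]
    apply Finset.sum_eq_zero
    intro k _
    rw [fiber_sum k (fun j => Real.log (φ k j)) (fun i => T i - Pl i)]
    apply Finset.sum_eq_zero
    intro j _
    have hsplit : (∑ i : ∀ k, Fin (n k), if i k = j then T i - Pl i else 0)
        = (∑ i : ∀ k, Fin (n k), if i k = j then T i else 0)
          - (∑ i : ∀ k, Fin (n k), if i k = j then Pl i else 0) := by
      rw [← Finset.sum_sub_distrib]
      apply Finset.sum_congr rfl
      intro i _
      split_ifs <;> simp
    rw [hsplit, hTm, hmarg, sub_self, mul_zero]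
  rw [Finset.mul_sum, Finset.mul_sum]
  simp only [Finset.sum_add_distrib] at hsum
  have hz2 : ∑ i : ∀ k, Fin (n k), η * L i * (T i - Pl i) = 0 := by
    have : ∀ i : ∀ k, Fin (n k), η * L i * (T i - Pl i) = η * (L i * (T i - Pl i)) :=
      fun i => by ring
    rw [Finset.sum_congr rfl (fun i _ => this i), ← Finset.mul_sum, hzero, mul_zero]
  rw [hz2] at hsum
  linarith



/-!
Recovery of the optimal plan from optimal dual vectors (Proposition 3.3):
if entrywise positive vectors `φ̂ k` maximize the Sinkhorn function over all
entrywise positive dual vectors, then the plan `Π̂ᵢ = 𝒦ᵢ ∏ₖ φ̂ᵏ_{iₖ}` is admissible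
and minimizes the regularized objective over the admissible set.
-/

theorem optimal_plan_from_optimal_duals
    (K : ℕ) (n : Fin K → ℕ)
    (μ : ∀ k, Fin (n k) → ℝ)
    (hμ0 : ∀ k j, 0 ≤ μ k j) (hμ1 : ∀ k, ∑ j, μ k j = 1)
    (C : (∀ k, Fin (n k)) → ℝ) (hC : ∀ i, 0 ≤ C i)
    (η : ℝ) (hη : 0 < η)
    (φ : ∀ k, Fin (n k) → ℝ) (hφ : ∀ k j, 0 < φ k j)
    (hmax : ∀ ψ : ∀ k, Fin (n k) → ℝ, (∀ k j, 0 < ψ k j) →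
      η * (∑ k, ∑ j, μ k j * Real.log (ψ k j))
        - η * (∑ i : ∀ k, Fin (n k), Real.exp (-C i / η) * ∏ k, ψ k (i k))
      ≤ η * (∑ k, ∑ j, μ k j * Real.log (φ k j))
        - η * (∑ i : ∀ k, Fin (n k), Real.exp (-C i / η) * ∏ k, φ k (i k))) :
    -- the plan Π̂ᵢ = 𝒦ᵢ ∏ₖ φ̂ᵏ_{iₖ} is admissible:
    ((∀ i : ∀ k, Fin (n k), 0 ≤ Real.exp (-C i / η) * ∏ k, φ k (i k)) ∧
      ∀ (k : Fin K) (j : Fin (n k)),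
        (∑ i : ∀ k, Fin (n k),
          if i k = j then Real.exp (-C i / η) * ∏ k, φ k (i k) else 0) = μ k j) ∧
    -- and it minimizes the regularized objective over all admissible plans:
    (∀ T : (∀ k, Fin (n k)) → ℝ,
      (∀ i, 0 ≤ T i) →
      (∀ (k : Fin K) (j : Fin (n k)),
        (∑ i : ∀ k, Fin (n k), if i k = j then T i else 0) = μ k j) →
      (∑ i : ∀ k, Fin (n k), (Real.exp (-C i / η) * ∏ k, φ k (i k)) * C i)
        + η * (∑ i : ∀ k, Fin (n k), (Real.exp (-C i / η) * ∏ k, φ k (i k)) *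
            (Real.log (Real.exp (-C i / η) * ∏ k, φ k (i k)) - 1))
      ≤ (∑ i : ∀ k, Fin (n k), T i * C i)
        + η * (∑ i : ∀ k, Fin (n k), T i * (Real.log (T i) - 1))) := by
  have hmarg := sinkhorn_marginals K n μ C η hη φ hφ hmax
  refine ⟨⟨fun i => le_of_lt (mul_pos (Real.exp_pos _)
    (Finset.prod_pos fun k _ => hφ k (i k))), hmarg⟩, fun T hT0 hTm =>
    minim K n μ C η hη φ hφ hmarg T hT0 hTm⟩
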